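/- The graph Γ(5) is distance-transitive: for all vertices u, v, x, y of Γ(5) with d(u,v) = d(x,y), there exists an automorphism f of Γ(5) with f(u) = x and f(v) = y, where d denotes graph distance in Γ(5). -/

import Mathlib

/-- The connection set `S = {(i,0), (0,i), (i,i) : 1 ≤ i ≤ n-1}` of `ℤ_n × ℤ_n`. -/
def cayS (n : ℕ) : Set (ZMod n × ZMod n) :=
  {p | p ≠ 0 ∧ (p.2 = 0 ∨ p.1 = 0 ∨ p.1 = p.2)}

/-- The Cayley graph `Γ(n) = Cay(ℤ_n × ℤ_n; S)`. -/
def Gamma (n : ℕ) : SimpleGraph (ZMod n × ZMod n) where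
  Adj x y := x ≠ y ∧ x - y ∈ cayS n
  symm := ⟨by
    rintro x y ⟨hxy, hne, h⟩
    refine ⟨Ne.symm hxy, sub_ne_zero_of_ne (Ne.symm hxy), ?_⟩
    simp only [Prod.fst_sub, Prod.snd_sub] at h ⊢
    rcases h with h | h | h
    · exact Or.inl (by linear_combination -h)
    · exact Or.inr (Or.inl (by linear_combination -h))
    · exact Or.inr (Or.inr (by linear_combination -h))⟩
  loopless := ⟨fun x h => h.1 rfl⟩

instance : DecidablePred (· ∈ cayS 5) :=
  fun p => inferInstanceAs (Decidable (p ≠ 0 ∧ (p.2 = 0 ∨ p.1 = 0 ∨ p.1 = p.2)))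

instance : DecidableRel (Gamma 5).Adj :=
  fun x y => inferInstanceAs (Decidable (x ≠ y ∧ x - y ∈ cayS 5))

instance : Fact (Nat.Prime 5) := ⟨by norm_num⟩

lemma zmod5_inv_cancel : ∀ c : ZMod 5, c ≠ 0 → c⁻¹ * c = 1 ∧ c * c⁻¹ = 1 :=
  fun c hc => ⟨inv_mul_cancel₀ hc, mul_inv_cancel₀ hc⟩

lemma negS_iff : ∀ p : ZMod 5 × ZMod 5, -p ∈ cayS 5 ↔ p ∈ cayS 5 := by decide

lemma adjE1 : ∀ c : ZMod 5, c ≠ 0 → ∀ x y : ZMod 5 × ZMod 5,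
    (Gamma 5).Adj (c * x.1, c * x.2) (c * y.1, c * y.2) ↔ (Gamma 5).Adj x y := by decide

lemma adjE2 : ∀ c : ZMod 5, c ≠ 0 → ∀ x y : ZMod 5 × ZMod 5,
    (Gamma 5).Adj (c * x.2, c * x.1) (c * y.2, c * y.1) ↔ (Gamma 5).Adj x y := by decide

lemma adjE3 : ∀ c : ZMod 5, c ≠ 0 → ∀ x y : ZMod 5 × ZMod 5,
    (Gamma 5).Adj (-(c * x.1), c * (x.2 - x.1)) (-(c * y.1), c * (y.2 - y.1)) ↔
      (Gamma 5).Adj x y := by decide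

def mkIso (e : (ZMod 5 × ZMod 5) ≃ (ZMod 5 × ZMod 5))
    (h : ∀ x y, (Gamma 5).Adj (e x) (e y) ↔ (Gamma 5).Adj x y) : Gamma 5 ≃g Gamma 5 :=
  ⟨e, h _ _⟩

def e1 (c : ZMod 5) (hc : c ≠ 0) : (ZMod 5 × ZMod 5) ≃ (ZMod 5 × ZMod 5) where
  toFun p := (c * p.1, c * p.2)
  invFun p := (c⁻¹ * p.1, c⁻¹ * p.2)
  left_inv p := by simp [← mul_assoc, (zmod5_inv_cancel c hc).1]
  right_inv p := by simp [← mul_assoc, (zmod5_inv_cancel c hc).2]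

def e2 (c : ZMod 5) (hc : c ≠ 0) : (ZMod 5 × ZMod 5) ≃ (ZMod 5 × ZMod 5) where
  toFun p := (c * p.2, c * p.1)
  invFun p := (c⁻¹ * p.2, c⁻¹ * p.1)
  left_inv p := by simp [← mul_assoc, (zmod5_inv_cancel c hc).1]
  right_inv p := by simp [← mul_assoc, (zmod5_inv_cancel c hc).2]

def e3 (c : ZMod 5) (hc : c ≠ 0) : (ZMod 5 × ZMod 5) ≃ (ZMod 5 × ZMod 5) where
  toFun p := (-(c * p.1), c * (p.2 - p.1))
  invFun p := (-(c⁻¹ * p.1), c⁻¹ * (p.2 - p.1))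
  left_inv p := by
    rcases p with ⟨x, y⟩
    have h5 : c⁻¹ * c = 1 := (zmod5_inv_cancel c hc).1
    simp only [Prod.mk.injEq]
    constructor
    · linear_combination (x : ZMod 5) * h5
    · linear_combination (y : ZMod 5) * h5
  right_inv p := by
    rcases p with ⟨x, y⟩
    have h5 : c * c⁻¹ = 1 := (zmod5_inv_cancel c hc).2
    simp only [Prod.mk.injEq]
    constructor
    · linear_combination (x : ZMod 5) * h5
    · linear_combination (y : ZMod 5) * h5

lemma five_eq_zero : (5 : ZMod 5) = 0 := by decide

lemma compl_cases : ∀ a : ZMod 5 × ZMod 5, a ≠ 0 → a ∉ cayS 5 →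
    a.1 ≠ 0 ∧ (a.2 = 2 * a.1 ∨ a.2 = 3 * a.1 ∨ a.2 = -a.1) := by decide

lemma three_mul_ne : ∀ t : ZMod 5, t ≠ 0 → 3 * t ≠ 0 := by decide

lemma exists_lin (a : ZMod 5 × ZMod 5) (ha : a ≠ 0) :
    ∃ g : Gamma 5 ≃g Gamma 5, g 0 = 0 ∧
      g (if a ∈ cayS 5 then ((1 : ZMod 5), (0 : ZMod 5)) else (1, 2)) = a := by
  by_cases hm : a ∈ cayS 5
  · rw [if_pos hm]
    rcases hm.2 with h | h | h
    · have h1 : a.1 ≠ 0 := fun h0 => ha (Prod.ext h0 h)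
      refine ⟨mkIso (e1 a.1 h1) (fun x y => adjE1 a.1 h1 x y), ?_, ?_⟩
      · show ((a.1 * 0, a.1 * 0) : ZMod 5 × ZMod 5) = 0
        simp
      · show ((a.1 * 1, a.1 * 0) : ZMod 5 × ZMod 5) = a
        rw [Prod.ext_iff]; constructor <;> simp [h]
    · have h1 : a.2 ≠ 0 := fun h0 => ha (Prod.ext h h0)
      refine ⟨mkIso (e2 a.2 h1) (fun x y => adjE2 a.2 h1 x y), ?_, ?_⟩
      · show ((a.2 * 0, a.2 * 0) : ZMod 5 × ZMod 5) = 0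
        simp
      · show ((a.2 * 0, a.2 * 1) : ZMod 5 × ZMod 5) = a
        rw [Prod.ext_iff]; constructor <;> simp [h]
    · have h1 : -a.1 ≠ 0 := by
        rw [neg_ne_zero]
        exact fun h0 => ha (Prod.ext h0 (by rw [← h, h0]; rfl))
      refine ⟨mkIso (e3 (-a.1) h1) (fun x y => adjE3 (-a.1) h1 x y), ?_, ?_⟩
      · show ((-(-a.1 * 0), -a.1 * (0 - 0)) : ZMod 5 × ZMod 5) = 0
        simp
      · show ((-(-a.1 * 1), -a.1 * (0 - 1)) : ZMod 5 × ZMod 5) = a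
        rw [Prod.ext_iff]; constructor
        · ring
        · rw [← h]; ring
  · rw [if_neg hm]
    obtain ⟨h1, hor⟩ := compl_cases a ha hm
    rcases hor with h | h | h
    · refine ⟨mkIso (e1 a.1 h1) (fun x y => adjE1 a.1 h1 x y), ?_, ?_⟩
      · show ((a.1 * 0, a.1 * 0) : ZMod 5 × ZMod 5) = 0
        simp
      · show ((a.1 * 1, a.1 * 2) : ZMod 5 × ZMod 5) = a
        rw [Prod.ext_iff]; constructor
        · ring
        · rw [h]; ring
    · have hc : (3 : ZMod 5) * a.1 ≠ 0 := three_mul_ne a.1 h1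
      refine ⟨mkIso (e2 (3 * a.1) hc) (fun x y => adjE2 (3 * a.1) hc x y), ?_, ?_⟩
      · show ((3 * a.1 * 0, 3 * a.1 * 0) : ZMod 5 × ZMod 5) = 0
        simp
      · show ((3 * a.1 * 2, 3 * a.1 * 1) : ZMod 5 × ZMod 5) = a
        rw [Prod.ext_iff]; constructor
        · linear_combination (a.1 : ZMod 5) * five_eq_zero
        · rw [h]; ring
    · have hc : -a.1 ≠ 0 := by rwa [neg_ne_zero]
      refine ⟨mkIso (e3 (-a.1) hc) (fun x y => adjE3 (-a.1) hc x y), ?_, ?_⟩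
      · show ((-(-a.1 * 0), -a.1 * (0 - 0)) : ZMod 5 × ZMod 5) = 0
        simp
      · show ((-(-a.1 * 1), -a.1 * (2 - 1)) : ZMod 5 × ZMod 5) = a
        rw [Prod.ext_iff]; constructor
        · ring
        · rw [h]; ring

def Tiso (a : ZMod 5 × ZMod 5) : Gamma 5 ≃g Gamma 5 :=
  mkIso (Equiv.addRight a) (by
    intro x y
    show ((x + a ≠ y + a) ∧ (x + a) - (y + a) ∈ cayS 5) ↔ (x ≠ y ∧ x - y ∈ cayS 5)
    rw [show (x + a) - (y + a) = x - y from by ring]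
    exact ⟨fun ⟨h1, h2⟩ => ⟨fun he => h1 (by rw [he]), h2⟩,
      fun ⟨h1, h2⟩ => ⟨fun he => h1 (add_right_cancel he), h2⟩⟩)

lemma gamma5_dist (u v : ZMod 5 × ZMod 5) :
    (Gamma 5).dist u v = if u = v then 0 else if u - v ∈ cayS 5 then 1 else 2 := by
  split_ifs with h1 h2
  · subst h1; exact SimpleGraph.dist_self
  · exact SimpleGraph.dist_eq_one_iff_adj.mpr ⟨h1, h2⟩
  · obtain ⟨u1, u2⟩ := u
    obtain ⟨v1, v2⟩ := v
    have hne : ((u1, u2) : ZMod 5 × ZMod 5) - (v1, v2) ≠ 0 := sub_ne_zero_of_ne h1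
    have hc : ¬(u2 - v2 = 0 ∨ u1 - v1 = 0 ∨ u1 - v1 = u2 - v2) :=
      fun hor => h2 ⟨hne, hor⟩
    push_neg at hc
    obtain ⟨h2', h1', _⟩ := hc
    have hu2 : u2 ≠ v2 := sub_ne_zero.mp h2'
    have hu1 : u1 ≠ v1 := sub_ne_zero.mp h1'
    have adj1 : (Gamma 5).Adj (u1, u2) (u1, v2) := by
      refine ⟨?_, ?_, Or.inr (Or.inl ?_)⟩
      · simp [Prod.ext_iff, hu2]
      · simp [Prod.ext_iff, sub_eq_zero, hu2]
      · show u1 - u1 = 0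
        exact sub_self _
    have adj2 : (Gamma 5).Adj (u1, v2) (v1, v2) := by
      refine ⟨?_, ?_, Or.inl ?_⟩
      · simp [Prod.ext_iff, hu1]
      · simp [Prod.ext_iff, sub_eq_zero, hu1]
      · show v2 - v2 = 0
        exact sub_self _
    have hle : (Gamma 5).dist ((u1, u2) : ZMod 5 × ZMod 5) (v1, v2) ≤ 2 := by
      simpa using SimpleGraph.dist_le
        (SimpleGraph.Walk.cons adj1 (SimpleGraph.Walk.cons adj2 SimpleGraph.Walk.nil))
    have hr : (Gamma 5).Reachable ((u1, u2) : ZMod 5 × ZMod 5) (v1, v2) :=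
      ⟨SimpleGraph.Walk.cons adj1 (SimpleGraph.Walk.cons adj2 SimpleGraph.Walk.nil)⟩
    have hne0 : (Gamma 5).dist ((u1, u2) : ZMod 5 × ZMod 5) (v1, v2) ≠ 0 :=
      fun h0 => h1 (hr.dist_eq_zero_iff.mp h0)
    have hne1 : (Gamma 5).dist ((u1, u2) : ZMod 5 × ZMod 5) (v1, v2) ≠ 1 :=
      fun h0 => h2 (SimpleGraph.dist_eq_one_iff_adj.mp h0).2
    omega

/-- The graph `Γ(5)` is distance-transitive. -/
theorem Gamma5_distance_transitive :
    ∀ u v x y : ZMod 5 × ZMod 5, (Gamma 5).dist u v = (Gamma 5).dist x y →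
      ∃ f : Gamma 5 ≃g Gamma 5, f u = x ∧ f v = y := by
  intro u v x y h
  rw [gamma5_dist, gamma5_dist] at h
  by_cases huv : u = v
  · rw [if_pos huv] at h
    have hxy : x = y := by
      by_contra hne
      rw [if_neg hne] at h
      split_ifs at h <;> omega
    subst huv; subst hxy
    refine ⟨Tiso (x - u), ?_, ?_⟩ <;>
      · show u + (x - u) = x
        ring
  · rw [if_neg huv] at h
    have hxy : x ≠ y := by
      intro he; rw [if_pos he] at h; split_ifs at h <;> omega
    rw [if_neg hxy] at h
    have hiff : (u - v ∈ cayS 5) ↔ (x - y ∈ cayS 5) := by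
      by_cases h1 : u - v ∈ cayS 5 <;> by_cases h2 : x - y ∈ cayS 5 <;>
        simp only [h1, h2, if_pos, if_neg, iff_true, iff_false] at h ⊢ <;>
        first | tauto | (exfalso; simp_all) | omega
    have ha : v - u ≠ 0 := sub_ne_zero_of_ne (Ne.symm huv)
    have hb : y - x ≠ 0 := sub_ne_zero_of_ne (Ne.symm hxy)
    have hma : (v - u ∈ cayS 5) ↔ (u - v ∈ cayS 5) := by
      rw [show v - u = -(u - v) from by ring]; exact negS_iff _
    have hmb : (y - x ∈ cayS 5) ↔ (x - y ∈ cayS 5) := by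
      rw [show y - x = -(x - y) from by ring]; exact negS_iff _
    have hiff' : (v - u ∈ cayS 5) ↔ (y - x ∈ cayS 5) := by
      rw [hma, hmb]; exact hiff
    obtain ⟨ga, hga0, hgaa⟩ := exists_lin (v - u) ha
    obtain ⟨gb, hgb0, hgbb⟩ := exists_lin (y - x) hb
    have hbase : (if v - u ∈ cayS 5 then ((1 : ZMod 5), (0 : ZMod 5)) else (1, 2)) =
        (if y - x ∈ cayS 5 then ((1 : ZMod 5), (0 : ZMod 5)) else (1, 2)) := by
      by_cases hA : v - u ∈ cayS 5
      · rw [if_pos hA, if_pos (hiff'.mp hA)]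
      · rw [if_neg hA, if_neg (fun hB => hA (hiff'.mpr hB))]
    have hsa : ga.symm (v - u) =
        (if v - u ∈ cayS 5 then ((1 : ZMod 5), (0 : ZMod 5)) else (1, 2)) := by
      have h' := congrArg ga.symm hgaa
      rw [ga.symm_apply_apply] at h'
      exact h'.symm
    have hs0 : ga.symm 0 = 0 := by
      conv_lhs => rw [← hga0]
      exact ga.symm_apply_apply _
    refine ⟨((Tiso (-u)).trans (ga.symm.trans gb)).trans (Tiso x), ?_, ?_⟩
    · show gb (ga.symm (u + -u)) + x = x
      rw [show u + -u = (0 : ZMod 5 × ZMod 5) from by ring, hs0, hgb0, zero_add]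
    · show gb (ga.symm (v + -u)) + x = y
      rw [show v + -u = v - u from by ring, hsa, hbase, hgbb]
      ring
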